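/- Assume g is regular, i.e. the adjoint map g♯ : P → Hom_A(P,Q), g♯(p₁)(p₂) := g(p₁,p₂), is an isomorphism of A-modules. Then the sequence 0 → Hom_A(P,Q) → D(T)₁ → Der_K(A, Hom_A(P,Q)) is exact, where: the first map sends an A-linear map φ : P → Q to the degree-1 derivation of T with components X^A = 0 and X^P = φ (this is a well-defined injective map); and the second map sends a degree-1 derivation X with components (X^A, X^P) to the Hom_A(P,Q)-valued derivation g♯ ∘ X^A of A. In particular, a degree-1 derivation X of T lies in the kernel of the second map if and only if X^A = 0, if and only if X^P is A-linear, so this kernel is isomorphic to Hom_A(P,Q) as an A-module. -/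

import Mathlib

variable {K A P Q : Type*}
variable [Field K] [CharZero K] [CommRing A] [Algebra K A]
variable [AddCommGroup P] [Module A P] [AddCommGroup Q] [Module A Q]
variable [Module K P] [Module K Q] [IsScalarTower K A P] [IsScalarTower K A Q]

/-- Multiplication of the triole algebra `T = A ⊕ P ⊕ Q` determined by the
`A`-bilinear form `g : P × P → Q`. -/
def trioleMul (g : P →ₗ[A] P →ₗ[A] Q) (x y : A × P × Q) : A × P × Q :=
  (x.1 * y.1,
    x.1 • y.2.1 + y.1 • x.2.1,
    x.1 • y.2.2 + y.1 • x.2.2 + g x.2.1 y.2.1)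

/-- `X : T → T` is a derivation of degree `k` of the triole algebra: the graded
Leibniz rule `X (s t) = X s · t + (-1)^(k·i) s · X t` holds for all homogeneous
`s ∈ Tᵢ` (for `i = 0, 1, 2`; the homogeneous components of all other degrees are zero,
where the Leibniz rule holds trivially) and all `t ∈ T`. -/
def IsTrioleDeriv (g : P →ₗ[A] P →ₗ[A] Q) (k : ℤ)
    (X : (A × P × Q) →ₗ[K] (A × P × Q)) : Prop :=
  (∀ (a : A) (t : A × P × Q),
    X (trioleMul g (a, 0, 0) t)
      = trioleMul g (X (a, 0, 0)) t + trioleMul g (a, 0, 0) (X t)) ∧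
  (∀ (p : P) (t : A × P × Q),
    X (trioleMul g (0, p, 0) t)
      = trioleMul g (X (0, p, 0)) t + ((-1 : K) ^ k) • trioleMul g (0, p, 0) (X t)) ∧
  (∀ (q : Q) (t : A × P × Q),
    X (trioleMul g (0, 0, q) t)
      = trioleMul g (X (0, 0, q)) t + trioleMul g (0, 0, q) (X t))


/-- The degree-1 `K`-linear map `T → T` with components `X^A : A → P`, `X^P : P → Q`. -/
def deg1Map (XA : A →ₗ[K] P) (XP : P →ₗ[K] Q) : (A × P × Q) →ₗ[K] (A × P × Q) :=
  LinearMap.prod 0 (LinearMap.prod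
    (XA ∘ₗ LinearMap.fst K A (P × Q))
    (XP ∘ₗ (LinearMap.fst K P Q ∘ₗ LinearMap.snd K A (P × Q))))

/-- `X` has degree `1`: it shifts the homogeneous components of `T = A ⊕ P ⊕ Q` by one. -/
def IsDegOneMap (X : (A × P × Q) →ₗ[K] (A × P × Q)) : Prop :=
  (∀ a : A, (X (a, 0, 0)).1 = 0 ∧ (X (a, 0, 0)).2.2 = 0) ∧
  (∀ p : P, (X (0, p, 0)).1 = 0 ∧ (X (0, p, 0)).2.1 = 0) ∧
  (∀ q : Q, X (0, 0, q) = 0)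


lemma deg1Map_apply (XA : A →ₗ[K] P) (XP : P →ₗ[K] Q) (t : A × P × Q) :
    deg1Map XA XP t = (0, XA t.1, XP t.2.1) := rfl

/-- for regular `g`, the sequence
`0 → Hom_A(P,Q) → D(T)₁ → Der_K(A, Hom_A(P,Q))` is exact. -/
theorem triolic_atiyah_sequence_degree_one (g : P →ₗ[A] P →ₗ[A] Q)
    (hreg : Function.Bijective fun p : P => (g p : P →ₗ[A] Q)) :
    -- the first map `Hom_A(P,Q) → D(T)₁` is well defined:
    (∀ φ : P →ₗ[A] Q, IsTrioleDeriv g 1 (deg1Map 0 (φ.restrictScalars K))) ∧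
    -- and injective:
    (∀ φ φ' : P →ₗ[A] Q,
      deg1Map (0 : A →ₗ[K] P) (φ.restrictScalars K)
        = deg1Map (0 : A →ₗ[K] P) (φ'.restrictScalars K) → φ = φ') ∧
    -- the second map is well defined: `g♯ ∘ X^A` is a `Hom_A(P,Q)`-valued derivation of `A`:
    (∀ X : (A × P × Q) →ₗ[K] (A × P × Q), IsDegOneMap X → IsTrioleDeriv g 1 X →
      ∀ a b : A,
        g ((X (a * b, 0, 0)).2.1)
          = a • g ((X (b, 0, 0)).2.1) + b • g ((X (a, 0, 0)).2.1)) ∧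
    -- exactness: for a degree-1 derivation `X`,
    -- `X` is in the kernel of the second map iff `X^A = 0`,
    (∀ X : (A × P × Q) →ₗ[K] (A × P × Q), IsDegOneMap X → IsTrioleDeriv g 1 X →
      (((∀ a : A, g ((X (a, 0, 0)).2.1) = 0) ↔ (∀ a : A, (X (a, 0, 0)).2.1 = 0)) ∧
      -- iff `X^P` is `A`-linear,
      ((∀ a : A, (X (a, 0, 0)).2.1 = 0) ↔
        (∀ (a : A) (p : P), (X (0, a • p, 0)).2.2 = a • (X (0, p, 0)).2.2)) ∧
      -- iff `X` lies in the image of the first map, i.e. the kernel is `Hom_A(P,Q)`: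
      ((∀ a : A, (X (a, 0, 0)).2.1 = 0) ↔
        ∃ φ : P →ₗ[A] Q, X = deg1Map 0 (φ.restrictScalars K)))) := by
  have hz : ∀ p : P, (g p : P →ₗ[A] Q) = 0 → p = 0 := by
    intro p hp
    have := hreg.injective (a₁ := p) (a₂ := 0) (by simpa using hp)
    exact this
  -- the A-derivation property of X^A
  have hXA : ∀ (X : (A × P × Q) →ₗ[K] (A × P × Q)), IsDegOneMap X → IsTrioleDeriv g 1 X →
      ∀ a b : A, (X (a * b, 0, 0)).2.1 = b • (X (a, 0, 0)).2.1 + a • (X (b, 0, 0)).2.1 := by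
    intro X hdeg hder a b
    have h := congrArg (fun t : A × P × Q => t.2.1) (hder.1 a ((b, 0, 0) : A × P × Q))
    simpa [trioleMul] using h
  -- the key relation for X^P
  have hXP : ∀ (X : (A × P × Q) →ₗ[K] (A × P × Q)), IsDegOneMap X → IsTrioleDeriv g 1 X →
      ∀ (a : A) (p : P),
        (X (0, a • p, 0)).2.2 = g ((X (a, 0, 0)).2.1) p + a • (X (0, p, 0)).2.2 := by
    intro X hdeg hder a p
    have h := congrArg (fun t : A × P × Q => t.2.2) (hder.1 a ((0, p, 0) : A × P × Q))
    simpa [trioleMul, (hdeg.1 a).1, (hdeg.1 a).2, (hdeg.2.1 p).1, (hdeg.2.1 p).2] using h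
  refine ⟨?_, ?_, ?_, ?_⟩
  · -- well-definedness of the first map
    intro φ
    refine ⟨?_, ?_, ?_⟩ <;> intro x t <;>
      simp [trioleMul, deg1Map_apply, Prod.ext_iff, map_smul, mul_comm]
  · -- injectivity
    intro φ φ' h
    ext p
    have := congrArg (fun F : (A × P × Q) →ₗ[K] (A × P × Q) =>
      (F ((0, p, 0) : A × P × Q)).2.2) h
    simpa [deg1Map_apply] using this
  · -- second map lands in derivations
    intro X hdeg hder a b
    rw [hXA X hdeg hder a b, map_add, map_smul, map_smul]
    exact add_comm _ _
  · intro X hdeg hder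
    have hiff2 : (∀ a : A, (X (a, 0, 0)).2.1 = 0) ↔
        (∀ (a : A) (p : P), (X (0, a • p, 0)).2.2 = a • (X (0, p, 0)).2.2) := by
      constructor
      · intro h a p
        rw [hXP X hdeg hder a p, h a, map_zero]
        simp
      · intro h a
        apply hz
        ext p
        have := hXP X hdeg hder a p
        rw [h a p] at this
        simpa using this.symm
    refine ⟨?_, hiff2, ?_⟩
    · constructor
      · intro h a
        exact hz _ (h a)
      · intro h a
        rw [h a, map_zero]
    · constructor
      · intro h
        have hlin := hiff2.mp h
        refine ⟨{ toFun := fun p => (X (0, p, 0)).2.2,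
                  map_add' := fun p p' => by
                    show (X (0, p + p', 0)).2.2 = (X (0, p, 0)).2.2 + (X (0, p', 0)).2.2
                    have e : ((0 : A), p + p', (0 : Q)) = ((0, p, 0) : A × P × Q) + (0, p', 0) := by
                      simp
                    rw [e, map_add]; rfl
                  map_smul' := fun a p => hlin a p }, ?_⟩
        apply LinearMap.ext
        rintro ⟨a, p, q⟩
        have e : ((a, p, q) : A × P × Q) = (a, 0, 0) + ((0, p, 0) + (0, 0, q)) := by simp
        rw [e, map_add, map_add, map_add, map_add, hdeg.2.2 q]
        have h1 : X ((a, 0, 0) : A × P × Q) = 0 := by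
          ext
          · exact (hdeg.1 a).1
          · exact h a
          · exact (hdeg.1 a).2
        have h2 : X ((0, p, 0) : A × P × Q) = ((0 : A), (0 : P), (X (0, p, 0)).2.2) := by
          ext
          · exact (hdeg.2.1 p).1
          · exact (hdeg.2.1 p).2
          · rfl
        rw [h1, h2]
        have h0 : X ((0, 0, 0) : A × P × Q) = 0 := map_zero X
        simp [deg1Map_apply, Prod.ext_iff, h0]
      · rintro ⟨φ, rfl⟩ a
        simp [deg1Map_apply]
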